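/- Let F be a treemap. Then the path set [F(T)] = {f : ℕ → ℕ | every finite initial segment of f belongs to F(T)}, equipped with the subspace topology inherited from Baire space, is homeomorphic to Baire space. In particular [F(T)] is nonempty, closed in Baire space, and not compact. -/

import Mathlib

/-- A treemap is `F : ℕ^{<ℕ} → ℕ^{<ℕ}` (strings as lists of naturals) with
`F(σ)⌢i ⊆ F(σ⌢i)` for all strings `σ` and all `i : ℕ`. -/
def Treemap (F : List ℕ → List ℕ) : Prop :=
  ∀ (σ : List ℕ) (i : ℕ), (F σ ++ [i]) <+: F (σ ++ [i])

/-- The tree `F(T) = {τ | ∃ σ, τ ⊆ F(σ)}` determined by a treemap `F`. -/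
def treeOf (F : List ℕ → List ℕ) : Set (List ℕ) :=
  {τ | ∃ σ : List ℕ, τ <+: F σ}

/-- The initial segment `f↾n = (f 0, …, f (n-1))` of `f : ℕ → ℕ`. -/
def restrict (f : ℕ → ℕ) (n : ℕ) : List ℕ :=
  (List.range n).map f

/-- `σ` is an initial segment of `f : ℕ → ℕ`. -/
def IsInitSeg (σ : List ℕ) (f : ℕ → ℕ) : Prop :=
  σ = restrict f σ.length

/-- The set of paths through the tree `F(T)` of a treemap `F`. -/
def pathSet (F : List ℕ → List ℕ) : Set (ℕ → ℕ) :=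
  {f | ∀ n : ℕ, restrict f n ∈ treeOf F}

namespace TreemapAux

variable {F : List ℕ → List ℕ}

@[simp] lemma restrict_length (f : ℕ → ℕ) (n : ℕ) : (restrict f n).length = n := by
  simp [restrict]

lemma restrict_succ (f : ℕ → ℕ) (n : ℕ) : restrict f (n+1) = restrict f n ++ [f n] := by
  simp [restrict, List.range_succ]

@[simp] lemma restrict_getElem (f : ℕ → ℕ) {m n : ℕ} (h : m < (restrict f n).length) :
    (restrict f n)[m] = f m := by
  simp [restrict]

lemma restrict_prefix (f : ℕ → ℕ) {a b : ℕ} (h : a ≤ b) :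
    restrict f a <+: restrict f b := by
  refine List.prefix_iff_eq_take.2 ?_
  apply List.ext_getElem (by simp [h]) ?_
  intro m h1 h2
  simp [restrict]

lemma treemap_mono (hF : Treemap F) : ∀ (t σ : List ℕ), F σ <+: F (σ ++ t) := by
  intro t
  induction t using List.reverseRecOn with
  | nil => intro σ; simp
  | append_singleton t i ih =>
    intro σ
    have h1 : F σ <+: F (σ ++ t) := ih σ
    have h2 : F (σ ++ t) <+: F (σ ++ t) ++ [i] := List.prefix_append _ _
    have h3 := hF (σ ++ t) i
    have he : σ ++ (t ++ [i]) = (σ ++ t) ++ [i] := by simp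
    rw [he]
    exact h1.trans (h2.trans h3)

lemma treemap_mono' (hF : Treemap F) {σ τ : List ℕ} (h : σ <+: τ) : F σ <+: F τ := by
  obtain ⟨t, rfl⟩ := h
  exact treemap_mono hF t σ

lemma treemap_length (hF : Treemap F) (σ : List ℕ) : σ.length ≤ (F σ).length := by
  induction σ using List.reverseRecOn with
  | nil => simp
  | append_singleton t i ih =>
    have := ((hF t i).length_le)
    simp at this
    simp
    omega

/-- strict length increase on proper extensions -/
lemma treemap_length_lt (hF : Treemap F) {σ τ : List ℕ} (h : σ <+: τ) (hne : σ ≠ τ) :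
    (F σ).length < (F τ).length := by
  obtain ⟨t, rfl⟩ := h
  cases t with
  | nil => simp at hne
  | cons i t =>
    have h1 : (F σ ++ [i]).length ≤ (F (σ ++ [i])).length := (hF σ i).length_le
    have h2 : F (σ ++ [i]) <+: F (σ ++ i :: t) := by
      have : σ ++ i :: t = (σ ++ [i]) ++ t := by simp
      rw [this]
      exact treemap_mono hF t _
    have := h2.length_le
    simp at h1
    omega

/-- If two strings are incomparable, there is a splitting point. -/
lemma exists_split : ∀ (σ τ : List ℕ), ¬ σ <+: τ → ¬ τ <+: σ →
    ∃ (ρ : List ℕ) (i j : ℕ), i ≠ j ∧ ρ ++ [i] <+: σ ∧ ρ ++ [j] <+: τ := by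
  intro σ
  induction σ with
  | nil => intro τ h _; exact absurd (List.nil_prefix) h
  | cons a σ' ih =>
    intro τ h1 h2
    cases τ with
    | nil => exact absurd (List.nil_prefix) h2
    | cons b τ' =>
      by_cases hab : a = b
      · subst hab
        rw [List.cons_prefix_cons] at h1 h2
        simp at h1 h2
        obtain ⟨ρ, i, j, hij, hi, hj⟩ := ih τ' h1 h2
        exact ⟨a :: ρ, i, j, hij, by simpa using hi, by simpa using hj⟩
      · exact ⟨[], a, b, hab, by simp, by simp⟩

/-- comparability: `F σ <+: F τ` forces `σ, τ` comparable. -/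
lemma treemap_comparable (hF : Treemap F) {σ τ : List ℕ} (h : F σ <+: F τ) :
    σ <+: τ ∨ τ <+: σ := by
  by_contra hc
  push_neg at hc
  obtain ⟨ρ, i, j, hij, hi, hj⟩ := exists_split σ τ hc.1 hc.2
  have h1 : F ρ ++ [i] <+: F τ :=
    ((hF ρ i).trans (treemap_mono' hF hi)).trans h
  have h2 : F ρ ++ [j] <+: F τ := (hF ρ j).trans (treemap_mono' hF hj)
  have : F ρ ++ [i] = F ρ ++ [j] := by
    have := List.prefix_of_prefix_length_le h1 h2 (by simp)
    exact this.eq_of_length_le (by simp)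
  simp at this
  exact hij this

/-- Key extension lemma. -/
lemma treemap_extend (hF : Treemap F) {σ τ : List ℕ} {i : ℕ}
    (h : F σ ++ [i] <+: F τ) : F (σ ++ [i]) <+: F τ := by
  have hσ : F σ <+: F τ := (List.prefix_append _ _).trans h
  have hlen : (F σ).length < (F τ).length := by
    have := h.length_le; simp at this; omega
  have hcomp := treemap_comparable hF hσ
  have hστ : σ <+: τ := by
    rcases hcomp with h' | h'
    · exact h'
    · rcases eq_or_ne τ σ with rfl | hne
      · exact List.prefix_rfl
      · exact absurd (treemap_length_lt hF h' hne) (by omega)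
  have hne : σ ≠ τ := by
    rintro rfl; omega
  -- σ is a proper prefix of τ; get the next letter j
  obtain ⟨t, rfl⟩ := hστ
  have ht : t ≠ [] := by rintro rfl; simp at hne
  obtain ⟨j, t', rfl⟩ := List.exists_cons_of_ne_nil ht
  have hj : F σ ++ [j] <+: F (σ ++ j :: t') := by
    have : σ ++ j :: t' = (σ ++ [j]) ++ t' := by simp
    rw [this]
    exact (hF σ j).trans (treemap_mono hF t' _)
  have : F σ ++ [i] = F σ ++ [j] := by
    have := List.prefix_of_prefix_length_le h hj (by simp)
    exact this.eq_of_length_le (by simp)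
  simp at this
  subst this
  have : σ ++ i :: t' = (σ ++ [i]) ++ t' := by simp
  rw [this]
  exact treemap_mono hF t' _

end TreemapAux

namespace TreemapAux

variable {F : List ℕ → List ℕ}

/-- The forward map: `Gmap F f` is the path `⋃ₙ F(f↾n)`. -/
def Gmap (F : List ℕ → List ℕ) (f : ℕ → ℕ) (n : ℕ) : ℕ :=
  (F (restrict f (n+1))).getD n 0

/-- The finite stages of the inverse map. -/
def glist (F : List ℕ → List ℕ) (g : ℕ → ℕ) : ℕ → List ℕ
  | 0 => []
  | k+1 => glist F g k ++ [g (F (glist F g k)).length]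

/-- The inverse map. -/
def Hmap (F : List ℕ → List ℕ) (g : ℕ → ℕ) (k : ℕ) : ℕ :=
  g (F (glist F g k)).length

lemma restrict_Hmap (g : ℕ → ℕ) (k : ℕ) : restrict (Hmap F g) k = glist F g k := by
  induction k with
  | zero => simp [restrict, glist]
  | succ k ih => rw [restrict_succ, ih]; rfl

lemma Gmap_getElem (hF : Treemap F) (f : ℕ → ℕ) {n m : ℕ}
    (h : m < (F (restrict f n)).length) :
    (F (restrict f n))[m] = Gmap F f m := by
  rcases le_or_gt n (m+1) with hle | hlt
  · have hp : F (restrict f n) <+: F (restrict f (m+1)) :=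
      treemap_mono' hF (restrict_prefix f hle)
    rw [hp.getElem h, Gmap, List.getD_eq_getElem _ _ (lt_of_lt_of_le h hp.length_le)]
  · have hp : F (restrict f (m+1)) <+: F (restrict f n) :=
      treemap_mono' hF (restrict_prefix f hlt.le)
    have hm : m < (F (restrict f (m+1))).length := by
      have := treemap_length hF (restrict f (m+1))
      simp at this; omega
    rw [← hp.getElem hm, Gmap, List.getD_eq_getElem _ _ hm]

/-- `F(f↾n)` is an initial segment of `Gmap F f`. -/
lemma initSeg_Gmap (hF : Treemap F) (f : ℕ → ℕ) (n : ℕ) :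
    F (restrict f n) = restrict (Gmap F f) (F (restrict f n)).length := by
  apply List.ext_getElem (by simp)
  intro m h1 h2
  rw [restrict_getElem, Gmap_getElem hF f h1]

lemma Gmap_mem_pathSet (hF : Treemap F) (f : ℕ → ℕ) : Gmap F f ∈ pathSet F := by
  intro n
  refine ⟨restrict f n, ?_⟩
  have hlen : n ≤ (F (restrict f n)).length := by
    have := treemap_length hF (restrict f n); simp at this; omega
  rw [initSeg_Gmap hF f n]
  exact restrict_prefix _ hlen

lemma Gmap_at_length (hF : Treemap F) (f : ℕ → ℕ) (k : ℕ) :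
    Gmap F f (F (restrict f k)).length = f k := by
  set m := (F (restrict f k)).length with hmdef
  have hp : F (restrict f k) ++ [f k] <+: F (restrict f (k+1)) := by
    have := hF (restrict f k) (f k)
    rwa [← restrict_succ] at this
  have hm : m < (F (restrict f (k+1))).length := by
    have := hp.length_le; simp [hmdef] at this ⊢; omega
  have h1 := Gmap_getElem hF f (n := k+1) (m := m) hm
  rw [← h1]
  have h2 := hp.getElem (i := m) (by simp [hmdef])
  rw [← h2]
  simp [hmdef]

lemma glist_Gmap (hF : Treemap F) (f : ℕ → ℕ) (k : ℕ) :
    glist F (Gmap F f) k = restrict f k := by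
  induction k with
  | zero => simp [glist, restrict]
  | succ k ih =>
    show glist F (Gmap F f) k ++ [Gmap F f (F (glist F (Gmap F f) k)).length]
        = restrict f (k+1)
    rw [ih, Gmap_at_length hF, restrict_succ]

lemma Hmap_Gmap (hF : Treemap F) (f : ℕ → ℕ) : Hmap F (Gmap F f) = f := by
  funext k
  show Gmap F f (F (glist F (Gmap F f) k)).length = f k
  rw [glist_Gmap hF, Gmap_at_length hF]

/-- For `g` in the path set, `F(glist g k)` is an initial segment of `g`. -/
lemma glist_initSeg (hF : Treemap F) {g : ℕ → ℕ} (hg : g ∈ pathSet F) (k : ℕ) :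
    F (glist F g k) = restrict g (F (glist F g k)).length := by
  induction k with
  | zero =>
    obtain ⟨τ, hτ⟩ := hg (F ([] : List ℕ)).length
    have h2 : F ([] : List ℕ) <+: F τ := treemap_mono' hF List.nil_prefix
    have h3 := List.prefix_of_prefix_length_le h2 hτ (by simp)
    simp only [glist]
    exact h3.eq_of_length_le (by simp)
  | succ k ih =>
    set σ := glist F g k with hσ
    set i := g (F σ).length with hi
    have hstep : glist F g (k+1) = σ ++ [i] := rfl
    rw [hstep]
    set m := (F (σ ++ [i])).length with hm
    obtain ⟨τ, hτ⟩ := hg m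
    have hlen : (F σ).length < m := by
      have h1 := (hF σ i).length_le
      simp [hm] at h1 ⊢; omega
    have h1 : F σ ++ [i] <+: restrict g m := by
      have he : restrict g ((F σ).length + 1) = F σ ++ [i] := by
        rw [restrict_succ, ← ih]
      rw [← he]
      exact restrict_prefix g (by omega)
    have h2 : F σ ++ [i] <+: F τ := h1.trans hτ
    have h3 : F (σ ++ [i]) <+: F τ := treemap_extend hF h2
    have h4 := List.prefix_of_prefix_length_le hτ h3 (by simp [← hm])
    exact (h4.eq_of_length_le (by simp [← hm])).symm

lemma Gmap_Hmap (hF : Treemap F) {g : ℕ → ℕ} (hg : g ∈ pathSet F) :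
    Gmap F (Hmap F g) = g := by
  funext n
  have hlen : n < (F (glist F g (n+1))).length := by
    have h1 := treemap_length hF (glist F g (n+1))
    have hl : (glist F g (n+1)).length = n+1 := by
      rw [← restrict_Hmap (F := F) g (n+1)]; simp
    omega
  have h0 := Gmap_getElem hF (Hmap F g) (n := n+1) (m := n)
    (by rw [restrict_Hmap]; exact hlen)
  have he : F (restrict (Hmap F g) (n+1)) = F (glist F g (n+1)) := by
    rw [restrict_Hmap]
  rw [← h0, List.getElem_of_eq he,
    List.getElem_of_eq (glist_initSeg hF hg (n+1)), restrict_getElem]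

lemma restrict_eq_ofFn (f : ℕ → ℕ) (n : ℕ) :
    restrict f n = List.ofFn (fun i : Fin n => f i) := by
  apply List.ext_getElem (by simp)
  intro m h1 h2
  simp [restrict]

lemma continuous_Gmap (F : List ℕ → List ℕ) : Continuous (Gmap F) := by
  apply continuous_pi
  intro n
  have he : (fun f => Gmap F f n) =
      (fun v : Fin (n+1) → ℕ => (F (List.ofFn v)).getD n 0) ∘ (fun f i => f i) := by
    funext f; simp [Gmap, restrict_eq_ofFn, Function.comp]
  rw [he]
  exact continuous_of_discreteTopology.comp
    (continuous_pi fun i : Fin (n+1) => continuous_apply (i : ℕ))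

lemma glist_prefix (g : ℕ → ℕ) {j k : ℕ} (h : j ≤ k) : glist F g j <+: glist F g k := by
  induction k with
  | zero => simp at h; subst h; exact List.prefix_rfl
  | succ k ih =>
    rcases Nat.eq_or_lt_of_le h with rfl | h'
    · exact List.prefix_rfl
    · exact (ih (Nat.lt_succ_iff.1 h')).trans (List.prefix_append _ _)

lemma continuous_Hmap (hF : Treemap F) : Continuous (Hmap F) := by
  apply continuous_pi
  intro k
  rw [continuous_iff_continuousAt]
  intro g
  unfold ContinuousAt
  rw [nhds_discrete ℕ, Filter.tendsto_pure]
  set M := (F (glist F g k)).length with hM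
  have hi : ∀ i : ℕ, ∀ᶠ g' in nhds g, g' i = g i := by
    intro i
    have hc := (continuous_apply (A := fun _ : ℕ => ℕ) i).continuousAt (x := g)
    rw [ContinuousAt, nhds_discrete ℕ, Filter.tendsto_pure] at hc
    exact hc
  have hall : ∀ᶠ g' in nhds g, ∀ i ∈ Finset.range (M+1), g' i = g i := by
    rw [Filter.eventually_all_finset]
    intro i _
    exact hi i
  filter_upwards [hall] with g' hg'
  have hglist : ∀ j ≤ k, glist F g' j = glist F g j := by
    intro j hj
    induction j with
    | zero => rfl
    | succ j ih =>
      have hj' : j ≤ k := Nat.le_of_succ_le hj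
      have h1 := ih hj'
      show glist F g' j ++ [g' (F (glist F g' j)).length] =
        glist F g j ++ [g (F (glist F g j)).length]
      rw [h1]
      have hidx : (F (glist F g j)).length ≤ M :=
        (treemap_mono' hF (glist_prefix g hj')).length_le
      rw [hg' _ (Finset.mem_range.2 (by omega))]
  show g' (F (glist F g' k)).length = g (F (glist F g k)).length
  rw [hglist k le_rfl, hg' _ (Finset.mem_range.2 (by omega))]

lemma pathSet_closed (F : List ℕ → List ℕ) : IsClosed (pathSet F) := by
  have he : pathSet F = ⋂ n, (fun f : ℕ → ℕ => (fun i : Fin n => f i)) ⁻¹'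
      {v : Fin n → ℕ | List.ofFn v ∈ treeOf F} := by
    ext f
    simp only [pathSet, Set.mem_setOf_eq, Set.mem_iInter, Set.mem_preimage,
      restrict_eq_ofFn]
  rw [he]
  exact isClosed_iInter fun n =>
    IsClosed.preimage (continuous_pi fun i : Fin n => continuous_apply (i : ℕ))
      (isClosed_discrete _)

lemma pathSet_not_compact (hF : Treemap F) : ¬ IsCompact (pathSet F) := by
  intro hc
  have himg : (fun g : ℕ → ℕ => g (F ([] : List ℕ)).length) '' pathSet F = Set.univ := by
    ext n
    simp only [Set.mem_univ, iff_true, Set.mem_image]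
    refine ⟨Gmap F (fun _ => n), Gmap_mem_pathSet hF _, ?_⟩
    have := Gmap_at_length hF (fun _ => n) 0
    simpa [restrict] using this
  have h2 : IsCompact ((fun g : ℕ → ℕ => g (F ([] : List ℕ)).length) '' pathSet F) :=
    hc.image (continuous_apply _)
  rw [himg] at h2
  exact Set.infinite_univ (h2.finite ⟨inferInstance⟩)

end TreemapAux

open TreemapAux in
/-- The path set `[F(T)]` of a treemap `F`, with the subspace topology from Baire space,
is homeomorphic to Baire space; in particular it is nonempty, closed, and not compact. -/
theorem pathSet_homeomorph_baire (F : List ℕ → List ℕ) (hF : Treemap F) :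
    Nonempty (↥(pathSet F) ≃ₜ (ℕ → ℕ)) ∧
    (pathSet F).Nonempty ∧ IsClosed (pathSet F) ∧ ¬ IsCompact (pathSet F) := by
  refine ⟨⟨{ toFun := fun p => Hmap F p.1
             invFun := fun f => ⟨Gmap F f, Gmap_mem_pathSet hF f⟩
             left_inv := fun p => Subtype.ext (Gmap_Hmap hF p.2)
             right_inv := fun f => Hmap_Gmap hF f
             continuous_toFun := (continuous_Hmap hF).comp continuous_subtype_val
             continuous_invFun := (continuous_Gmap F).subtype_mk _ }⟩,
          ⟨Gmap F (fun _ => 0), Gmap_mem_pathSet hF _⟩,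
          pathSet_closed F, pathSet_not_compact hF⟩
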